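/- The Gaussian tail function Φ satisfies the Bellman inequality beyond √3: for every x ≥ √3 and every τ ∈ (−1,1), Φ(x) ≥ (1/2)[Φ(X(x,−τ)) + Φ(X(x,τ))]. -/

import Mathlib

open MeasureTheory

noncomputable section

/-- The Gaussian tail function `Φ(x) = ∫ₓ^∞ e^{-y²/2} dy`. -/
def gaussPhi (x : ℝ) : ℝ := ∫ y in Set.Ioi x, Real.exp (-y ^ 2 / 2)

/-- `X(x,τ) = (x+τ)/√(1-τ²)`. -/
def XX (x t : ℝ) : ℝ := (x + t) / Real.sqrt (1 - t ^ 2)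

lemma gaussf_int : Integrable (fun y : ℝ => Real.exp (-y ^ 2 / 2)) := by
  have h := integrable_exp_neg_mul_sq (b := (1/2 : ℝ)) (by norm_num)
  convert h using 2 with y
  ring_nf

lemma gaussf_cont : Continuous (fun y : ℝ => Real.exp (-y ^ 2 / 2)) := by
  continuity

lemma gaussPhi_hasDerivAt (x : ℝ) :
    HasDerivAt gaussPhi (-(Real.exp (-x ^ 2 / 2))) x := by
  set f : ℝ → ℝ := fun y => Real.exp (-y ^ 2 / 2) with hf
  have hgp : gaussPhi = fun u => (∫ y, f y) - ((∫ y in Set.Iic (0:ℝ), f y) + ∫ y in (0:ℝ)..u, f y) := by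
    funext u
    have h1 : (∫ y in Set.Iic u, f y) + (∫ y in Set.Ioi u, f y) = ∫ y, f y :=
      intervalIntegral.integral_Iic_add_Ioi gaussf_int.integrableOn gaussf_int.integrableOn
    have h2 : (∫ y in Set.Iic u, f y) - (∫ y in Set.Iic (0:ℝ), f y) = ∫ y in (0:ℝ)..u, f y :=
      intervalIntegral.integral_Iic_sub_Iic gaussf_int.integrableOn gaussf_int.integrableOn
    simp only [gaussPhi]
    linarith
  rw [hgp]
  have hFTC : HasDerivAt (fun u => ∫ y in (0:ℝ)..u, f y) (f x) x :=
    intervalIntegral.integral_hasDerivAt_right gaussf_int.intervalIntegrable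
      gaussf_cont.aestronglyMeasurable.stronglyMeasurableAtFilter gaussf_cont.continuousAt
  simpa using (hFTC.const_add (∫ y in Set.Iic (0:ℝ), f y)).const_sub (∫ y, f y)

-- log inequality
lemma log_ineq {u : ℝ} (h0 : 0 ≤ u) (h1 : u < 1) :
    6 * u / (3 - u ^ 2) ≤ Real.log (1 + u) - Real.log (1 - u) := by
  set φ : ℝ → ℝ := fun v => Real.log (1 + v) - Real.log (1 - v) - 6 * v / (3 - v ^ 2) with hφ
  have hder : ∀ v ∈ Set.Ioo (-1 : ℝ) 1, HasDerivAt φ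
      (1 / (1 + v) + 1 / (1 - v) - (18 + 6 * v ^ 2) / (3 - v ^ 2) ^ 2) v := by
    intro v hv
    obtain ⟨hv1, hv2⟩ := hv
    have h1 : (1 : ℝ) + v ≠ 0 := by nlinarith
    have h2 : (1 : ℝ) - v ≠ 0 := by nlinarith
    have h3 : (3 : ℝ) - v ^ 2 ≠ 0 := by nlinarith
    have d1 : HasDerivAt (fun v : ℝ => Real.log (1 + v)) (1 / (1 + v)) v := by
      have := ((hasDerivAt_id v).const_add 1).log h1
      simpa using this
    have d2 : HasDerivAt (fun v : ℝ => Real.log (1 - v)) (-(1 / (1 - v))) v := by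
      have := ((hasDerivAt_id v).const_sub 1).log h2
      simp only [one_div] at this ⊢
      refine this.congr_deriv ?_
      field_simp
      simp [div_self h2]
    have d3 : HasDerivAt (fun v : ℝ => 6 * v / (3 - v ^ 2))
        ((18 + 6 * v ^ 2) / (3 - v ^ 2) ^ 2) v := by
      have dn : HasDerivAt (fun v : ℝ => 6 * v) 6 v := by
        simpa using (hasDerivAt_id v).const_mul 6
      have dd : HasDerivAt (fun v : ℝ => 3 - v ^ 2) (-(2 * v)) v := by
        simpa using ((hasDerivAt_pow 2 v)).const_sub 3
      have := dn.div dd h3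
      refine this.congr_deriv ?_
      field_simp
      ring
    have := (d1.sub d2).sub d3
    refine this.congr_deriv ?_
    ring
  have hmono : MonotoneOn φ (Set.Icc 0 u) := by
    rcases eq_or_lt_of_le h0 with rfl | h0'
    · intro a ha b hb _
      rw [Set.Icc_self, Set.mem_singleton_iff] at ha hb
      simp [ha, hb]
    apply monotoneOn_of_deriv_nonneg (convex_Icc 0 u)
    · intro t ht
      obtain ⟨ht0, ht1⟩ := ht
      exact (hder t ⟨by linarith, by linarith⟩).continuousAt.continuousWithinAt
    · intro t ht
      rw [interior_Icc] at ht
      exact (hder t ⟨by linarith [ht.1], by linarith [ht.2]⟩).differentiableAt.differentiableWithinAt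
    · intro t ht
      rw [interior_Icc] at ht
      obtain ⟨ht0, ht1⟩ := ht
      rw [(hder t ⟨by linarith, by linarith⟩).deriv]
      have e1 : (0:ℝ) < 1 + t := by linarith
      have e2 : (0:ℝ) < 1 - t := by linarith
      have e3 : (0:ℝ) < 3 - t ^ 2 := by nlinarith
      rw [sub_nonneg, div_add_div _ _ (ne_of_gt e1) (ne_of_gt e2), div_le_div_iff₀ (by positivity) (by positivity)]
      nlinarith [sq_nonneg t, sq_nonneg (t^2), pow_pos e3 2]
  have h := hmono (Set.left_mem_Icc.2 h0) (Set.right_mem_Icc.2 h0) h0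
  have hz : φ 0 = 0 := by simp [hφ]
  rw [hz] at h
  simp only [hφ] at h
  linarith

-- the key pointwise inequality for the derivative
lemma key_ineq {x t : ℝ} (hx : Real.sqrt 3 ≤ x) (ht0 : 0 < t) (ht1 : t < 1) :
    (1 - x * t) * Real.exp (-((x - t) ^ 2 / (2 * (1 - t ^ 2)))) ≤
      (1 + x * t) * Real.exp (-((x + t) ^ 2 / (2 * (1 - t ^ 2)))) := by
  have hx3 : (3 : ℝ) ≤ x ^ 2 := by
    have h3 : (0:ℝ) ≤ 3 := by norm_num
    nlinarith [Real.sq_sqrt h3, Real.sqrt_nonneg (3:ℝ), Real.sqrt_le_sqrt h3]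
  have hx1 : (1 : ℝ) ≤ x := by nlinarith [Real.sqrt_nonneg (3:ℝ)]
  set u := x * t with hu
  have hu0 : 0 < u := by positivity
  rcases le_or_gt 1 u with h | h
  · calc (1 - u) * Real.exp (-((x - t) ^ 2 / (2 * (1 - t ^ 2)))) ≤ 0 := by
          apply mul_nonpos_of_nonpos_of_nonneg (by linarith) (Real.exp_nonneg _)
      _ ≤ (1 + u) * Real.exp (-((x + t) ^ 2 / (2 * (1 - t ^ 2)))) := by positivity
  · -- u < 1 case
    have ht2 : (0:ℝ) < 1 - t ^ 2 := by nlinarith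
    have hAB : (x + t) ^ 2 / (2 * (1 - t ^ 2)) - (x - t) ^ 2 / (2 * (1 - t ^ 2))
        = 2 * u / (1 - t ^ 2) := by
      field_simp
      ring
    -- t^2 ≤ u^2/3 since x^2 ≥ 3
    have htu : 3 * t ^ 2 ≤ u ^ 2 := by
      have : u ^ 2 = x ^ 2 * t ^ 2 := by rw [hu]; ring
      nlinarith [sq_nonneg t]
    have h3u : (0:ℝ) < 3 - u ^ 2 := by nlinarith
    have hstep : 2 * u / (1 - t ^ 2) ≤ 6 * u / (3 - u ^ 2) := by
      rw [div_le_div_iff₀ ht2 h3u]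
      nlinarith
    have hlog := log_ineq (le_of_lt hu0) h
    have hexp : Real.exp (2 * u / (1 - t ^ 2)) ≤ (1 + u) / (1 - u) := by
      have h1u : (0:ℝ) < 1 + u := by linarith
      have h2u : (0:ℝ) < 1 - u := by linarith
      calc Real.exp (2 * u / (1 - t ^ 2)) ≤ Real.exp (Real.log (1 + u) - Real.log (1 - u)) :=
            Real.exp_le_exp.2 (le_trans hstep hlog)
        _ = (1 + u) / (1 - u) := by
            rw [Real.exp_sub, Real.exp_log h1u, Real.exp_log h2u]
    -- conclude
    have h2u : (0:ℝ) < 1 - u := by linarith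
    have hE : Real.exp (-((x - t) ^ 2 / (2 * (1 - t ^ 2)))) =
        Real.exp (-((x + t) ^ 2 / (2 * (1 - t ^ 2)))) * Real.exp (2 * u / (1 - t ^ 2)) := by
      rw [← Real.exp_add]
      congr 1
      linarith [hAB]
    rw [hE]
    have hEpos : (0:ℝ) < Real.exp (-((x + t) ^ 2 / (2 * (1 - t ^ 2)))) := Real.exp_pos _
    calc (1 - u) * (Real.exp (-((x + t) ^ 2 / (2 * (1 - t ^ 2)))) * Real.exp (2 * u / (1 - t ^ 2)))
        ≤ (1 - u) * (Real.exp (-((x + t) ^ 2 / (2 * (1 - t ^ 2)))) * ((1 + u) / (1 - u))) := by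
          apply mul_le_mul_of_nonneg_left _ (le_of_lt h2u)
          exact mul_le_mul_of_nonneg_left hexp (le_of_lt hEpos)
      _ = (1 + u) * Real.exp (-((x + t) ^ 2 / (2 * (1 - t ^ 2)))) := by
          field_simp

lemma XX_hasDerivAt (x : ℝ) {t : ℝ} (ht : t ∈ Set.Ioo (-1 : ℝ) 1) :
    HasDerivAt (fun s => XX x s) ((1 + x * t) / Real.sqrt (1 - t ^ 2) ^ 3) t := by
  obtain ⟨ht1, ht2⟩ := ht
  have ht2' : (0:ℝ) < 1 - t ^ 2 := by nlinarith
  have hs : (0:ℝ) < Real.sqrt (1 - t ^ 2) := Real.sqrt_pos.2 ht2'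
  have hsq : Real.sqrt (1 - t ^ 2) ^ 2 = 1 - t ^ 2 := Real.sq_sqrt (le_of_lt ht2')
  have dq : HasDerivAt (fun s : ℝ => 1 - s ^ 2) (-(2 * t)) t := by
    simpa using (hasDerivAt_pow 2 t).const_sub 1
  have ds : HasDerivAt (fun s : ℝ => Real.sqrt (1 - s ^ 2))
      (-(2 * t) / (2 * Real.sqrt (1 - t ^ 2))) t := dq.sqrt (ne_of_gt ht2')
  have dn : HasDerivAt (fun s : ℝ => x + s) 1 t := by
    simpa using (hasDerivAt_id t).const_add x
  have := dn.div ds (ne_of_gt hs)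
  refine this.congr_deriv ?_
  set S := Real.sqrt (1 - t ^ 2) with hS
  field_simp
  linear_combination hsq

lemma key_half {x : ℝ} (hx : Real.sqrt 3 ≤ x) {τ : ℝ} (h0 : 0 ≤ τ) (h1 : τ < 1) :
    (gaussPhi (XX x (-τ)) + gaussPhi (XX x τ)) / 2 ≤ gaussPhi x := by
  set F : ℝ → ℝ := fun t => gaussPhi (XX x (-t)) + gaussPhi (XX x t) with hFdef
  set D : ℝ → ℝ := fun t =>
    -(Real.exp (-(XX x (-t)) ^ 2 / 2)) * ((1 + x * -t) / Real.sqrt (1 - (-t) ^ 2) ^ 3 * -1) +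
      -(Real.exp (-(XX x t) ^ 2 / 2)) * ((1 + x * t) / Real.sqrt (1 - t ^ 2) ^ 3) with hDdef
  have hF : ∀ t ∈ Set.Ioo (-1 : ℝ) 1, HasDerivAt F (D t) t := by
    intro t ht
    obtain ⟨ht1, ht2⟩ := ht
    have htneg : -t ∈ Set.Ioo (-1 : ℝ) 1 := ⟨by linarith, by linarith⟩
    have h1 : HasDerivAt (fun s => gaussPhi (XX x s))
        (-(Real.exp (-(XX x t) ^ 2 / 2)) * ((1 + x * t) / Real.sqrt (1 - t ^ 2) ^ 3)) t :=
      (gaussPhi_hasDerivAt (XX x t)).comp t (XX_hasDerivAt x ⟨ht1, ht2⟩)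
    have hinner : HasDerivAt (fun s : ℝ => XX x (-s))
        ((1 + x * -t) / Real.sqrt (1 - (-t) ^ 2) ^ 3 * -1) t :=
      (XX_hasDerivAt x htneg).comp t (hasDerivAt_neg t)
    have h2 : HasDerivAt (fun s => gaussPhi (XX x (-s)))
        (-(Real.exp (-(XX x (-t)) ^ 2 / 2)) *
          ((1 + x * -t) / Real.sqrt (1 - (-t) ^ 2) ^ 3 * -1)) t :=
      by have := (gaussPhi_hasDerivAt (XX x (-t))).comp t hinner; exact this
    exact h2.add h1
  have hDle : ∀ t, 0 < t → t < 1 → D t ≤ 0 := by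
    intro t ht0 ht1
    have ht2 : (0:ℝ) < 1 - t ^ 2 := by nlinarith
    have hS : (0:ℝ) < Real.sqrt (1 - t ^ 2) := Real.sqrt_pos.2 ht2
    have hsq : Real.sqrt (1 - t ^ 2) ^ 2 = 1 - t ^ 2 := Real.sq_sqrt (le_of_lt ht2)
    have hneg : ((-t) : ℝ) ^ 2 = t ^ 2 := by ring
    have hXp : (XX x t) ^ 2 = (x + t) ^ 2 / (1 - t ^ 2) := by
      rw [XX, div_pow, hsq]
    have hXm : (XX x (-t)) ^ 2 = (x - t) ^ 2 / (1 - t ^ 2) := by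
      rw [XX, hneg, div_pow, hsq]
      ring_nf
    have hkey := key_ineq hx ht0 ht1
    simp only [hDdef, hneg]
    have e1 : -(XX x (-t)) ^ 2 / 2 = -((x - t) ^ 2 / (2 * (1 - t ^ 2))) := by
      rw [hXm]; field_simp
    have e2 : -(XX x t) ^ 2 / 2 = -((x + t) ^ 2 / (2 * (1 - t ^ 2))) := by
      rw [hXp]; field_simp
    rw [e1, e2]
    have hS3 : (0:ℝ) < Real.sqrt (1 - t ^ 2) ^ 3 := by positivity
    have hdiv : (1 - x * t) * Real.exp (-((x - t) ^ 2 / (2 * (1 - t ^ 2)))) / Real.sqrt (1 - t ^ 2) ^ 3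
        ≤ (1 + x * t) * Real.exp (-((x + t) ^ 2 / (2 * (1 - t ^ 2)))) / Real.sqrt (1 - t ^ 2) ^ 3 :=
      div_le_div_of_nonneg_right hkey hS3.le
    have goal_eq : -Real.exp (-((x - t) ^ 2 / (2 * (1 - t ^ 2)))) * ((1 + x * -t) / Real.sqrt (1 - t ^ 2) ^ 3 * -1) +
        -Real.exp (-((x + t) ^ 2 / (2 * (1 - t ^ 2)))) * ((1 + x * t) / Real.sqrt (1 - t ^ 2) ^ 3)
        = (1 - x * t) * Real.exp (-((x - t) ^ 2 / (2 * (1 - t ^ 2)))) / Real.sqrt (1 - t ^ 2) ^ 3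
          - (1 + x * t) * Real.exp (-((x + t) ^ 2 / (2 * (1 - t ^ 2)))) / Real.sqrt (1 - t ^ 2) ^ 3 := by
      ring
    rw [goal_eq]
    linarith
  rcases eq_or_lt_of_le h0 with rfl | h0'
  · have hx0 : XX x 0 = x := by simp [XX]
    rw [neg_zero, hx0]
    linarith
  · have hanti : AntitoneOn F (Set.Icc 0 τ) := by
      apply antitoneOn_of_deriv_nonpos (convex_Icc 0 τ)
      · intro t ht
        exact (hF t ⟨by linarith [ht.1], by linarith [ht.2]⟩).continuousAt.continuousWithinAt
      · intro t ht
        rw [interior_Icc] at ht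
        exact (hF t ⟨by linarith [ht.1],
          by linarith [ht.2]⟩).differentiableAt.differentiableWithinAt
      · intro t ht
        rw [interior_Icc] at ht
        rw [(hF t ⟨by linarith [ht.1], by linarith [ht.2]⟩).deriv]
        exact hDle t ht.1 (by linarith [ht.2])
    have h := hanti (Set.left_mem_Icc.2 h0) (Set.right_mem_Icc.2 h0) h0
    have hF0 : F 0 = 2 * gaussPhi x := by
      simp only [hFdef]
      rw [neg_zero]
      have hx0 : XX x 0 = x := by simp [XX]
      rw [hx0]; ring
    rw [hF0] at h
    simp only [hFdef] at h
    linarith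


theorem gaussPhi_bellman_inequality :
    ∀ x : ℝ, Real.sqrt 3 ≤ x → ∀ τ ∈ Set.Ioo (-1 : ℝ) 1,
      (gaussPhi (XX x (-τ)) + gaussPhi (XX x τ)) / 2 ≤ gaussPhi x := by
  intro x hx τ hτ
  obtain ⟨h1, h2⟩ := hτ
  rcases le_or_gt 0 τ with h | h
  · exact key_half hx h h2
  · have hmain := key_half hx (le_of_lt (neg_pos.2 h)) (by linarith : -τ < 1)
    rw [neg_neg] at hmain
    linarith
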